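/- Let c be a simple-model cost function (depending only on direction and layer) on the infinite grid graph G with l layers, and let r, s ∈ V be two vertices. Then there exists a minimum-cost path P between r and s in (G, c) that contains at most one maximal sequence of consecutive horizontal edges and at most one maximal sequence of consecutive vertical edges (and hence at most three maximal sequences of consecutive via edges). -/

import Mathlib

/-- Vertices of the infinite grid graph: `(x, y, z)` where `z` is the layer. -/
abbrev Vtx : Type := ℤ × ℤ × ℤ

/-- Two vertices of the infinite grid graph with layers `1, …, l` are adjacent iff both have
their layer coordinate in `{1, …, l}` and they differ by exactly `1` in exactly one
coordinate.  An edge changing the first coordinate is horizontal, one changing the second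
coordinate is vertical, and one changing the third coordinate is a via. -/
def Adj (l : ℤ) (u v : Vtx) : Prop :=
  1 ≤ u.2.2 ∧ u.2.2 ≤ l ∧ 1 ≤ v.2.2 ∧ v.2.2 ≤ l ∧
    |u.1 - v.1| + |u.2.1 - v.2.1| + |u.2.2 - v.2.2| = 1

/-- Simple-model edge cost: a horizontal (resp. vertical) edge on layer `z` costs `ch z`
(resp. `cv z`) and a via between layers `z` and `z+1` costs `cvia z`. -/
def ecost (ch cv cvia : ℤ → ℝ) (u v : Vtx) : ℝ :=
  if u.1 ≠ v.1 then ch u.2.2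
  else if u.2.1 ≠ v.2.1 then cv u.2.2
  else cvia (min u.2.2 v.2.2)

/-- The cost of a walk (given as the list of its vertices) is the sum of its edge costs. -/
def wcost (c : Vtx → Vtx → ℝ) : List Vtx → ℝ
  | [] => 0
  | [_] => 0
  | u :: v :: P => c u v + wcost c (v :: P)

/-- `P` is a walk from `u` to `v` with respect to the adjacency relation `A`. -/
def IsWalkA (A : Vtx → Vtx → Prop) (P : List Vtx) (u v : Vtx) : Prop :=
  P ≠ [] ∧ P.Chain' A ∧ P.head? = some u ∧ P.getLast? = some v

/-- The distance between two vertices: the infimum cost of a walk between them. -/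
noncomputable def gdistA (A : Vtx → Vtx → Prop) (c : Vtx → Vtx → ℝ) (u v : Vtx) : ℝ :=
  sInf { m : ℝ | ∃ P, IsWalkA A P u v ∧ wcost c P = m }

/-- The distance from a vertex to a set of vertices. -/
noncomputable def gdistSetA (A : Vtx → Vtx → Prop) (c : Vtx → Vtx → ℝ) (u : Vtx)
    (T : Set Vtx) : ℝ :=
  sInf { m : ℝ | ∃ P v, v ∈ T ∧ IsWalkA A P u v ∧ wcost c P = m }

/-- The direction of an edge: horizontal, vertical, or via. -/
inductive Dir : Type
  | hor | ver | via
deriving DecidableEq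

/-- The direction of the edge from `u` to `v`. -/
def dirOf (u v : Vtx) : Dir :=
  if u.1 ≠ v.1 then .hor else if u.2.1 ≠ v.2.1 then .ver else .via

/-- The list of directions of the edges of a walk. -/
def dirs (P : List Vtx) : List Dir := List.zipWith dirOf P P.tail

section Aux

noncomputable def nch (l : ℤ) (ch : ℤ → ℝ) (z : ℤ) : ℝ := if 1 ≤ z ∧ z ≤ l then ch z else 0

noncomputable def nvia (l : ℤ) (cvia : ℤ → ℝ) (k : ℤ) : ℝ := if 1 ≤ k ∧ k + 1 ≤ l then cvia k else 0

lemma nch_nonneg {l : ℤ} {ch : ℤ → ℝ} (h : ∀ z, 1 ≤ z → z ≤ l → 0 < ch z) (z : ℤ) :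
    0 ≤ nch l ch z := by
  unfold nch; split_ifs with hz
  · exact (h z hz.1 hz.2).le
  · exact le_refl _

lemma nvia_nonneg {l : ℤ} {cvia : ℤ → ℝ} (h : ∀ z, 1 ≤ z → z < l → 0 < cvia z) (k : ℤ) :
    0 ≤ nvia l cvia k := by
  unfold nvia; split_ifs with hk
  · exact (h k hk.1 (by omega)).le
  · exact le_refl _

lemma nch_eq {l : ℤ} (ch : ℤ → ℝ) {z : ℤ} (h1 : 1 ≤ z) (h2 : z ≤ l) : nch l ch z = ch z :=
  if_pos ⟨h1, h2⟩

lemma nvia_eq {l : ℤ} (cvia : ℤ → ℝ) {k : ℤ} (h1 : 1 ≤ k) (h2 : k + 1 ≤ l) :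
    nvia l cvia k = cvia k := if_pos ⟨h1, h2⟩

noncomputable def Phi (l : ℤ) (cvia : ℤ → ℝ) (t : ℤ) : ℝ :=
  (∑ k ∈ Finset.Ico 0 t, nvia l cvia k) - ∑ k ∈ Finset.Ico t 0, nvia l cvia k

noncomputable def Wv (l : ℤ) (cvia : ℤ → ℝ) (a b : ℤ) : ℝ := |Phi l cvia b - Phi l cvia a|

lemma sum_Ico_glue (g : ℤ → ℝ) {a b c : ℤ} (h1 : a ≤ b) (h2 : b ≤ c) :
    (∑ k ∈ Finset.Ico a b, g k) + ∑ k ∈ Finset.Ico b c, g k = ∑ k ∈ Finset.Ico a c, g k := by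
  rw [← Finset.sum_union (Finset.Ico_disjoint_Ico_consecutive a b c),
    Finset.Ico_union_Ico_eq_Ico h1 h2]

lemma Phi_sub {l : ℤ} {cvia : ℤ → ℝ} {a b : ℤ} (h : a ≤ b) :
    Phi l cvia b - Phi l cvia a = ∑ k ∈ Finset.Ico a b, nvia l cvia k := by
  unfold Phi
  rcases le_or_gt 0 a with h0a | h0a
  · rw [Finset.Ico_eq_empty (a := a) (b := 0) (by omega),
      Finset.Ico_eq_empty (a := b) (b := 0) (by omega)]
    have := sum_Ico_glue (nvia l cvia) h0a h
    simp only [Finset.sum_empty]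
    linarith
  · rcases le_or_gt b 0 with hb0 | hb0
    · rw [Finset.Ico_eq_empty (a := 0) (b := a) (by omega),
        Finset.Ico_eq_empty (a := 0) (b := b) (by omega)]
      have := sum_Ico_glue (nvia l cvia) h hb0
      simp only [Finset.sum_empty]
      linarith
    · rw [Finset.Ico_eq_empty (a := b) (b := 0) (by omega),
        Finset.Ico_eq_empty (a := 0) (b := a) (by omega)]
      have := sum_Ico_glue (nvia l cvia) h0a.le hb0.le
      simp only [Finset.sum_empty]
      linarith

lemma Wv_eq_sum {l : ℤ} {cvia : ℤ → ℝ} (hx : ∀ z, 1 ≤ z → z < l → 0 < cvia z) {a b : ℤ}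
    (h : a ≤ b) : Wv l cvia a b = ∑ k ∈ Finset.Ico a b, nvia l cvia k := by
  unfold Wv
  rw [Phi_sub h]
  exact abs_of_nonneg (Finset.sum_nonneg fun k _ => nvia_nonneg hx k)

lemma Wv_nonneg (l : ℤ) (cvia : ℤ → ℝ) (a b : ℤ) : 0 ≤ Wv l cvia a b := abs_nonneg _

lemma Wv_symm (l : ℤ) (cvia : ℤ → ℝ) (a b : ℤ) : Wv l cvia a b = Wv l cvia b a :=
  abs_sub_comm _ _

lemma Wv_self (l : ℤ) (cvia : ℤ → ℝ) (a : ℤ) : Wv l cvia a a = 0 := by simp [Wv]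

lemma Wv_tri (l : ℤ) (cvia : ℤ → ℝ) (a b c : ℤ) :
    Wv l cvia a c ≤ Wv l cvia a b + Wv l cvia b c := by
  have := abs_sub_le (Phi l cvia c) (Phi l cvia b) (Phi l cvia a)
  unfold Wv
  linarith [this]

lemma Ico_singleton (a : ℤ) : Finset.Ico a (a + 1) = {a} := by
  ext x; simp [Finset.mem_Ico]; omega

lemma Wv_adj {l : ℤ} {cvia : ℤ → ℝ} (hx : ∀ z, 1 ≤ z → z < l → 0 < cvia z) {a b : ℤ}
    (h : |a - b| = 1) : Wv l cvia a b = nvia l cvia (min a b) := by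
  rcases abs_eq (by norm_num : (0:ℤ) ≤ 1) |>.mp h with h1 | h1
  · -- a = b + 1
    rw [Wv_symm, Wv_eq_sum hx (by omega), show a = b + 1 by omega, Ico_singleton,
      Finset.sum_singleton, min_comm, min_eq_left (by omega)]
  · rw [Wv_eq_sum hx (by omega), show b = a + 1 by omega, Ico_singleton,
      Finset.sum_singleton, min_eq_left (by omega)]

lemma sum_Ico_ofRange (g : ℤ → ℝ) (a : ℤ) (n : ℕ) :
    ∑ i ∈ Finset.range n, g (a + i) = ∑ k ∈ Finset.Ico a (a + n), g k := by
  induction n with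
  | zero => simp
  | succ m ih =>
    rw [Finset.sum_range_succ, ih,
      show (a + (↑(m + 1) : ℤ)) = (a + m) + 1 by push_cast; ring,
      ← sum_Ico_glue g (by omega : a ≤ a + (m:ℤ)) (by omega : a + (m:ℤ) ≤ a + m + 1),
      Ico_singleton, Finset.sum_singleton]

end Aux

section Potential

noncomputable def F1 (l : ℤ) (ch cv cvia : ℤ → ℝ) (s : Vtx) (u : Vtx) (p : ℤ × ℤ) : ℝ :=
  ((|u.1 - s.1| : ℤ) : ℝ) * nch l ch p.1 + ((|u.2.1 - s.2.1| : ℤ) : ℝ) * nch l cv p.2 +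
    (Wv l cvia u.2.2 p.1 + Wv l cvia p.1 p.2 + Wv l cvia p.2 s.2.2)

noncomputable def F2 (l : ℤ) (ch cv cvia : ℤ → ℝ) (s : Vtx) (u : Vtx) (p : ℤ × ℤ) : ℝ :=
  ((|u.1 - s.1| : ℤ) : ℝ) * nch l ch p.1 + ((|u.2.1 - s.2.1| : ℤ) : ℝ) * nch l cv p.2 +
    (Wv l cvia u.2.2 p.2 + Wv l cvia p.2 p.1 + Wv l cvia p.1 s.2.2)

noncomputable def sqF (l : ℤ) : Finset (ℤ × ℤ) := Finset.Icc 1 l ×ˢ Finset.Icc 1 l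

lemma sqF_ne {l : ℤ} (hl : 1 ≤ l) : (sqF l).Nonempty :=
  ⟨(1, 1), by simp [sqF, Finset.mem_product, Finset.mem_Icc]; omega⟩

lemma mem_sqF {l : ℤ} {p : ℤ × ℤ} : p ∈ sqF l ↔ (1 ≤ p.1 ∧ p.1 ≤ l) ∧ 1 ≤ p.2 ∧ p.2 ≤ l := by
  simp [sqF, Finset.mem_product, Finset.mem_Icc]

noncomputable def DD (l : ℤ) (ch cv cvia : ℤ → ℝ) (s : Vtx) (hl : 1 ≤ l) (u : Vtx) : ℝ :=
  (sqF l).inf' (sqF_ne hl) fun p => min (F1 l ch cv cvia s u p) (F2 l ch cv cvia s u p)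

lemma DD_le_F1 {l : ℤ} {ch cv cvia : ℤ → ℝ} {s : Vtx} (hl : 1 ≤ l) {u : Vtx} {p : ℤ × ℤ}
    (hp : p ∈ sqF l) : DD l ch cv cvia s hl u ≤ F1 l ch cv cvia s u p :=
  (Finset.inf'_le _ hp).trans (min_le_left _ _)

lemma DD_le_F2 {l : ℤ} {ch cv cvia : ℤ → ℝ} {s : Vtx} (hl : 1 ≤ l) {u : Vtx} {p : ℤ × ℤ}
    (hp : p ∈ sqF l) : DD l ch cv cvia s hl u ≤ F2 l ch cv cvia s u p :=
  (Finset.inf'_le _ hp).trans (min_le_right _ _)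

lemma adj_cases {l : ℤ} {u v : Vtx} (h : Adj l u v) :
    (|u.1 - v.1| = 1 ∧ u.2.1 = v.2.1 ∧ u.2.2 = v.2.2) ∨
    (u.1 = v.1 ∧ |u.2.1 - v.2.1| = 1 ∧ u.2.2 = v.2.2) ∨
    (u.1 = v.1 ∧ u.2.1 = v.2.1 ∧ |u.2.2 - v.2.2| = 1) := by
  have h5 := h.2.2.2.2
  simp only [Int.abs_eq_natAbs] at h5 ⊢
  omega

lemma feas {l : ℤ} {ch cv cvia : ℤ → ℝ} {s : Vtx} (hl : 1 ≤ l)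
    (hch : ∀ z, 1 ≤ z → z ≤ l → 0 < ch z) (hcv : ∀ z, 1 ≤ z → z ≤ l → 0 < cv z)
    (hcvia : ∀ z, 1 ≤ z → z < l → 0 < cvia z) {u v : Vtx} (h : Adj l u v) :
    DD l ch cv cvia s hl u ≤ ecost ch cv cvia u v + DD l ch cv cvia s hl v := by
  have hu1 := h.1
  have hu2 := h.2.1
  have hv1 := h.2.2.1
  have hv2 := h.2.2.2.1
  obtain ⟨p, hp, hDv⟩ := Finset.exists_mem_eq_inf' (sqF_ne hl)
    (fun p => min (F1 l ch cv cvia s v p) (F2 l ch cv cvia s v p))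
  have hDv2 : DD l ch cv cvia s hl v = min (F1 l ch cv cvia s v p) (F2 l ch cv cvia s v p) := hDv
  have hp1 := (mem_sqF.mp hp).1
  have hp2 := (mem_sqF.mp hp).2
  have hdxv : (0:ℝ) ≤ ((|v.1 - s.1| : ℤ) : ℝ) := Int.cast_nonneg (abs_nonneg _)
  have hdyv : (0:ℝ) ≤ ((|v.2.1 - s.2.1| : ℤ) : ℝ) := Int.cast_nonneg (abs_nonneg _)
  rcases adj_cases h with ⟨hx, hy, hz⟩ | ⟨hx, hy, hz⟩ | ⟨hx, hy, hz⟩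
  · -- horizontal edge
    have hne : u.1 ≠ v.1 := by intro hc; rw [hc, sub_self] at hx; simp at hx
    have hec : ecost ch cv cvia u v = nch l ch v.2.2 := by
      unfold ecost; rw [if_pos hne, hz, nch_eq ch hv1 hv2]
    have hcH : 0 ≤ nch l ch v.2.2 := nch_nonneg hch _
    have hdxZ : |u.1 - s.1| ≤ |v.1 - s.1| + 1 := by
      have h3 := abs_sub_le u.1 v.1 s.1; linarith
    have hdx : ((|u.1 - s.1| : ℤ) : ℝ) ≤ ((|v.1 - s.1| : ℤ) : ℝ) + 1 := by exact_mod_cast hdxZ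
    rcases le_total (nch l ch p.1) (nch l ch v.2.2) with hcc | hcc
    · have key := mul_le_mul_of_nonneg_right hdx (nch_nonneg hch p.1)
      rw [add_mul, one_mul] at key
      rcases le_total (F1 l ch cv cvia s v p) (F2 l ch cv cvia s v p) with hm | hm
      · calc DD l ch cv cvia s hl u ≤ F1 l ch cv cvia s u p := DD_le_F1 hl hp
          _ ≤ nch l ch v.2.2 + F1 l ch cv cvia s v p := by
              unfold F1; rw [hy, hz]; linarith
          _ = ecost ch cv cvia u v + DD l ch cv cvia s hl v := by
              rw [hec, hDv2, min_eq_left hm]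
      · calc DD l ch cv cvia s hl u ≤ F2 l ch cv cvia s u p := DD_le_F2 hl hp
          _ ≤ nch l ch v.2.2 + F2 l ch cv cvia s v p := by
              unfold F2; rw [hy, hz]; linarith
          _ = ecost ch cv cvia u v + DD l ch cv cvia s hl v := by
              rw [hec, hDv2, min_eq_right hm]
    · have hq : ((v.2.2, p.2) : ℤ × ℤ) ∈ sqF l := mem_sqF.mpr ⟨⟨hv1, hv2⟩, hp2⟩
      have key := mul_le_mul_of_nonneg_right hdx (nch_nonneg hch v.2.2)
      rw [add_mul, one_mul] at key
      have key2 : ((|v.1 - s.1| : ℤ) : ℝ) * nch l ch v.2.2 ≤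
          ((|v.1 - s.1| : ℤ) : ℝ) * nch l ch p.1 := mul_le_mul_of_nonneg_left hcc hdxv
      have t1 : Wv l cvia v.2.2 v.2.2 = 0 := Wv_self l cvia _
      rcases le_total (F1 l ch cv cvia s v p) (F2 l ch cv cvia s v p) with hm | hm
      · have t2 : Wv l cvia v.2.2 p.2 ≤ Wv l cvia v.2.2 p.1 + Wv l cvia p.1 p.2 :=
          Wv_tri l cvia _ _ _
        calc DD l ch cv cvia s hl u ≤ F1 l ch cv cvia s u (v.2.2, p.2) := DD_le_F1 hl hq
          _ ≤ nch l ch v.2.2 + F1 l ch cv cvia s v p := by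
              unfold F1; dsimp only; rw [hy, hz, t1]; linarith
          _ = ecost ch cv cvia u v + DD l ch cv cvia s hl v := by
              rw [hec, hDv2, min_eq_left hm]
      · have t3 : Wv l cvia p.2 s.2.2 ≤ Wv l cvia p.2 p.1 + Wv l cvia p.1 s.2.2 :=
          Wv_tri l cvia _ _ _
        calc DD l ch cv cvia s hl u ≤ F1 l ch cv cvia s u (v.2.2, p.2) := DD_le_F1 hl hq
          _ ≤ nch l ch v.2.2 + F2 l ch cv cvia s v p := by
              unfold F1 F2; dsimp only; rw [hy, hz, t1]; linarith
          _ = ecost ch cv cvia u v + DD l ch cv cvia s hl v := by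
              rw [hec, hDv2, min_eq_right hm]
  · -- vertical edge
    have hnex : ¬(u.1 ≠ v.1) := by simp [hx]
    have hney : u.2.1 ≠ v.2.1 := by intro hc; rw [hc, sub_self] at hy; simp at hy
    have hec : ecost ch cv cvia u v = nch l cv v.2.2 := by
      unfold ecost; rw [if_neg hnex, if_pos hney, hz, nch_eq cv hv1 hv2]
    have hcV : 0 ≤ nch l cv v.2.2 := nch_nonneg hcv _
    have hdyZ : |u.2.1 - s.2.1| ≤ |v.2.1 - s.2.1| + 1 := by
      have h3 := abs_sub_le u.2.1 v.2.1 s.2.1; linarith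
    have hdy : ((|u.2.1 - s.2.1| : ℤ) : ℝ) ≤ ((|v.2.1 - s.2.1| : ℤ) : ℝ) + 1 := by
      exact_mod_cast hdyZ
    rcases le_total (nch l cv p.2) (nch l cv v.2.2) with hcc | hcc
    · have key := mul_le_mul_of_nonneg_right hdy (nch_nonneg hcv p.2)
      rw [add_mul, one_mul] at key
      rcases le_total (F1 l ch cv cvia s v p) (F2 l ch cv cvia s v p) with hm | hm
      · calc DD l ch cv cvia s hl u ≤ F1 l ch cv cvia s u p := DD_le_F1 hl hp
          _ ≤ nch l cv v.2.2 + F1 l ch cv cvia s v p := by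
              unfold F1; rw [hx, hz]; linarith
          _ = ecost ch cv cvia u v + DD l ch cv cvia s hl v := by
              rw [hec, hDv2, min_eq_left hm]
      · calc DD l ch cv cvia s hl u ≤ F2 l ch cv cvia s u p := DD_le_F2 hl hp
          _ ≤ nch l cv v.2.2 + F2 l ch cv cvia s v p := by
              unfold F2; rw [hx, hz]; linarith
          _ = ecost ch cv cvia u v + DD l ch cv cvia s hl v := by
              rw [hec, hDv2, min_eq_right hm]
    · have hq : ((p.1, v.2.2) : ℤ × ℤ) ∈ sqF l := mem_sqF.mpr ⟨hp1, hv1, hv2⟩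
      have key := mul_le_mul_of_nonneg_right hdy (nch_nonneg hcv v.2.2)
      rw [add_mul, one_mul] at key
      have key2 : ((|v.2.1 - s.2.1| : ℤ) : ℝ) * nch l cv v.2.2 ≤
          ((|v.2.1 - s.2.1| : ℤ) : ℝ) * nch l cv p.2 := mul_le_mul_of_nonneg_left hcc hdyv
      have t1 : Wv l cvia v.2.2 v.2.2 = 0 := Wv_self l cvia _
      rcases le_total (F1 l ch cv cvia s v p) (F2 l ch cv cvia s v p) with hm | hm
      · have t3 : Wv l cvia p.1 s.2.2 ≤ Wv l cvia p.1 p.2 + Wv l cvia p.2 s.2.2 :=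
          Wv_tri l cvia _ _ _
        calc DD l ch cv cvia s hl u ≤ F2 l ch cv cvia s u (p.1, v.2.2) := DD_le_F2 hl hq
          _ ≤ nch l cv v.2.2 + F1 l ch cv cvia s v p := by
              unfold F1 F2; dsimp only; rw [hx, hz, t1]; linarith
          _ = ecost ch cv cvia u v + DD l ch cv cvia s hl v := by
              rw [hec, hDv2, min_eq_left hm]
      · have t2 : Wv l cvia v.2.2 p.1 ≤ Wv l cvia v.2.2 p.2 + Wv l cvia p.2 p.1 :=
          Wv_tri l cvia _ _ _
        calc DD l ch cv cvia s hl u ≤ F2 l ch cv cvia s u (p.1, v.2.2) := DD_le_F2 hl hq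
          _ ≤ nch l cv v.2.2 + F2 l ch cv cvia s v p := by
              unfold F2; dsimp only; rw [hx, hz, t1]; linarith
          _ = ecost ch cv cvia u v + DD l ch cv cvia s hl v := by
              rw [hec, hDv2, min_eq_right hm]
  · -- via edge
    have hnex : ¬(u.1 ≠ v.1) := by simp [hx]
    have hney : ¬(u.2.1 ≠ v.2.1) := by simp [hy]
    have hWuv : Wv l cvia u.2.2 v.2.2 = nvia l cvia (min u.2.2 v.2.2) := Wv_adj hcvia hz
    have hec : ecost ch cv cvia u v = Wv l cvia u.2.2 v.2.2 := by
      unfold ecost; rw [if_neg hnex, if_neg hney, hWuv]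
      rcases (abs_eq (by norm_num : (0:ℤ) ≤ 1)).mp hz with h1 | h1
      · rw [min_eq_right (by omega : v.2.2 ≤ u.2.2), nvia_eq cvia hv1 (by omega)]
      · rw [min_eq_left (by omega : u.2.2 ≤ v.2.2), nvia_eq cvia hu1 (by omega)]
    rcases le_total (F1 l ch cv cvia s v p) (F2 l ch cv cvia s v p) with hm | hm
    · have t2 : Wv l cvia u.2.2 p.1 ≤ Wv l cvia u.2.2 v.2.2 + Wv l cvia v.2.2 p.1 :=
        Wv_tri l cvia _ _ _
      calc DD l ch cv cvia s hl u ≤ F1 l ch cv cvia s u p := DD_le_F1 hl hp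
        _ ≤ Wv l cvia u.2.2 v.2.2 + F1 l ch cv cvia s v p := by
            unfold F1; rw [hx, hy]; linarith
        _ = ecost ch cv cvia u v + DD l ch cv cvia s hl v := by
            rw [hec, hDv2, min_eq_left hm]
    · have t2 : Wv l cvia u.2.2 p.2 ≤ Wv l cvia u.2.2 v.2.2 + Wv l cvia v.2.2 p.2 :=
        Wv_tri l cvia _ _ _
      calc DD l ch cv cvia s hl u ≤ F2 l ch cv cvia s u p := DD_le_F2 hl hp
        _ ≤ Wv l cvia u.2.2 v.2.2 + F2 l ch cv cvia s v p := by
            unfold F2; rw [hx, hy]; linarith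
        _ = ecost ch cv cvia u v + DD l ch cv cvia s hl v := by
            rw [hec, hDv2, min_eq_right hm]

end Potential

section LB

lemma DDs_le_zero {l : ℤ} {ch cv cvia : ℤ → ℝ} {s : Vtx} (hl : 1 ≤ l)
    (hs : 1 ≤ s.2.2 ∧ s.2.2 ≤ l) : DD l ch cv cvia s hl s ≤ 0 := by
  have hq : ((s.2.2, s.2.2) : ℤ × ℤ) ∈ sqF l := mem_sqF.mpr ⟨⟨hs.1, hs.2⟩, hs.1, hs.2⟩
  refine (DD_le_F1 hl hq).trans ?_
  unfold F1
  dsimp only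
  simp only [sub_self, abs_zero, Wv_self]
  norm_num

lemma walk_lb {l : ℤ} {ch cv cvia : ℤ → ℝ} {s : Vtx} (hl : 1 ≤ l)
    (hch : ∀ z, 1 ≤ z → z ≤ l → 0 < ch z) (hcv : ∀ z, 1 ≤ z → z ≤ l → 0 < cv z)
    (hcvia : ∀ z, 1 ≤ z → z < l → 0 < cvia z) (hs : 1 ≤ s.2.2 ∧ s.2.2 ≤ l) :
    ∀ (P : List Vtx) (u : Vtx), P.Chain' (Adj l) → P.head? = some u → P.getLast? = some s →
      DD l ch cv cvia s hl u ≤ wcost (ecost ch cv cvia) P := by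
  intro P
  induction P with
  | nil => intro u _ hu; simp at hu
  | cons a t ih =>
    intro u hc hu hlast
    simp only [List.head?_cons, Option.some.injEq] at hu
    subst hu
    cases t with
    | nil =>
      simp only [List.getLast?_singleton, Option.some.injEq] at hlast
      subst hlast
      exact DDs_le_zero hl hs
    | cons b t' =>
      rw [List.Chain', List.isChain_cons_cons] at hc
      rw [List.getLast?_cons_cons] at hlast
      have hstep := feas (s := s) hl hch hcv hcvia hc.1
      have hrest := ih b hc.2 rfl hlast
      show DD l ch cv cvia s hl a ≤ ecost ch cv cvia a b + wcost (ecost ch cv cvia) (b :: t')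
      linarith

end LB
section Destutter
variable {α : Type*} [DecidableEq α]

lemma destutter'_Ne_eq (b : α) (t : List α) :
    List.destutter' Ne b t = List.destutter' (fun x1 x2 : α => x1 ≠ x2) b t := rfl

lemma count_destutter_le_destutter' (d : α) :
    ∀ (t : List α) (b : α),
      (t.destutter (· ≠ ·)).count d ≤ (t.destutter' (· ≠ ·) b).count d := by
  intro t
  induction t with
  | nil => intro b; simp [List.destutter_nil, List.destutter'_nil]
  | cons z t' ih =>
    intro b
    by_cases hbz : b ≠ z
    · rw [List.destutter_cons', List.destutter'_cons_pos _ hbz, List.count_cons,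
        destutter'_Ne_eq]
      omega
    · push_neg at hbz
      subst hbz
      rw [List.destutter_cons', List.destutter'_cons_neg _ (by simp)]

lemma count_destutter'_cons (d : α) :
    ∀ (t : List α) (a : α),
      ((t.destutter' (· ≠ ·) a).count d) ≤ (if a = d then 1 else 0) + (t.destutter (· ≠ ·)).count d := by
  intro t
  induction t with
  | nil =>
    intro a
    simp only [List.destutter'_nil, List.destutter_nil, List.count_nil, List.count_singleton]
    split_ifs with h <;> simp_all [beq_iff_eq]
  | cons b t' ih =>
    intro a
    by_cases hab : a ≠ b
    · rw [List.destutter'_cons_pos _ hab, List.destutter_cons', List.count_cons,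
        destutter'_Ne_eq]
      simp only [beq_iff_eq]
      split_ifs <;> omega
    · push_neg at hab
      subst hab
      rw [List.destutter'_cons_neg _ (by simp)]
      exact (ih a).trans (by
        have := count_destutter_le_destutter' d t' a
        rw [List.destutter_cons']
        omega)

lemma destutter'_replicate_append (x : α) :
    ∀ (n : ℕ) (L : List α),
      List.destutter' (· ≠ ·) x (List.replicate n x ++ L) = List.destutter' (· ≠ ·) x L := by
  intro n
  induction n with
  | zero => intro L; simp
  | succ m ih =>
    intro L
    rw [List.replicate_succ, List.cons_append, List.destutter'_cons_neg _ (by simp)]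
    exact ih L

lemma count_destutter_replicate_append (d x : α) (n : ℕ) (L : List α) :
    ((List.replicate n x ++ L).destutter (· ≠ ·)).count d ≤
      (if x = d then 1 else 0) + (L.destutter (· ≠ ·)).count d := by
  cases n with
  | zero => simp only [List.replicate_zero, List.nil_append]; split_ifs <;> omega
  | succ m =>
    rw [List.replicate_succ, List.cons_append, List.destutter_cons',
      destutter'_replicate_append]
    exact count_destutter'_cons d L x

end Destutter
section ListInfra

lemma wcost_cons (c : Vtx → Vtx → ℝ) {P : List Vtx} {v : Vtx} (u : Vtx)
    (h : P.head? = some v) : wcost c (u :: P) = c u v + wcost c P := by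
  cases P with
  | nil => simp at h
  | cons w t => simp at h; subst h; rfl

lemma dirs_cons {P : List Vtx} {v : Vtx} (u : Vtx) (h : P.head? = some v) :
    dirs (u :: P) = dirOf u v :: dirs P := by
  cases P with
  | nil => simp at h
  | cons w t => simp at h; subst h; rfl

/-- A "ray": n steps along f starting at f a. -/
def ray (f : ℤ → Vtx) : ℤ → ℕ → List Vtx
  | a, 0 => [f a]
  | a, n + 1 => f a :: ray f (a + 1) n

lemma ray_head? (f : ℤ → Vtx) (a : ℤ) (n : ℕ) : (ray f a n).head? = some (f a) := by
  cases n <;> rfl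

lemma ray_ne_nil (f : ℤ → Vtx) (a : ℤ) (n : ℕ) : ray f a n ≠ [] := by
  cases n <;> simp [ray]

lemma ray_getLast? (f : ℤ → Vtx) : ∀ (n : ℕ) (a : ℤ),
    (ray f a n).getLast? = some (f (a + n)) := by
  intro n
  induction n with
  | zero => intro a; simp [ray]
  | succ m ih =>
    intro a
    show (f a :: ray f (a + 1) m).getLast? = _
    rw [List.getLast?_cons, ih (a + 1)]
    simp only [Option.getD_some, Option.some.injEq]
    congr 1
    push_cast
    ring

lemma ray_chain' {A : Vtx → Vtx → Prop} (f : ℤ → Vtx) : ∀ (n : ℕ) (a : ℤ),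
    (∀ i : ℕ, i < n → A (f (a + i)) (f (a + i + 1))) → (ray f a n).Chain' A := by
  intro n
  induction n with
  | zero => intro a _; exact List.isChain_singleton _
  | succ m ih =>
    intro a h
    show ((f a :: ray f (a + 1) m)).Chain' A
    rw [List.Chain', List.isChain_cons]
    constructor
    · intro y hy
      rw [ray_head? f (a+1) m] at hy
      simp at hy
      subst hy
      have := h 0 (by omega)
      simpa using this
    · exact ih (a + 1) (fun i hi => by
        have := h (i + 1) (by omega)
        have e1 : a + (↑(i + 1) : ℤ) = a + 1 + i := by push_cast; ring
        rw [e1] at this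
        convert this using 3 <;> ring)

lemma ray_wcost (c : Vtx → Vtx → ℝ) (f : ℤ → Vtx) : ∀ (n : ℕ) (a : ℤ),
    wcost c (ray f a n) = ∑ i ∈ Finset.range n, c (f (a + i)) (f (a + i + 1)) := by
  intro n
  induction n with
  | zero => intro a; simp [ray, wcost]
  | succ m ih =>
    intro a
    show wcost c (f a :: ray f (a+1) m) = _
    rw [wcost_cons c (f a) (ray_head? f (a+1) m), ih (a+1), Finset.sum_range_succ']
    simp only [Nat.cast_zero, add_zero, Nat.cast_add, Nat.cast_one]
    rw [add_comm]
    congr 1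
    apply Finset.sum_congr rfl
    intro i _
    congr 2 <;> push_cast <;> ring

lemma ray_dirs {d : Dir} (f : ℤ → Vtx) : ∀ (n : ℕ) (a : ℤ),
    (∀ i : ℕ, i < n → dirOf (f (a + i)) (f (a + i + 1)) = d) →
    dirs (ray f a n) = List.replicate n d := by
  intro n
  induction n with
  | zero => intro a _; simp [ray, dirs]
  | succ m ih =>
    intro a h
    show dirs (f a :: ray f (a+1) m) = _
    rw [dirs_cons (f a) (ray_head? f (a+1) m), List.replicate_succ]
    congr 1
    · have := h 0 (by omega)
      simpa using this
    · exact ih (a + 1) (fun i hi => by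
        have := h (i + 1) (by omega)
        have e1 : a + (↑(i + 1) : ℤ) = a + 1 + i := by push_cast; ring
        rw [e1] at this
        convert this using 3 <;> ring)

/-- gluing two walks sharing an endpoint -/
lemma glue_spec (A : Vtx → Vtx → Prop) (c : Vtx → Vtx → ℝ) :
    ∀ (P : List Vtx) {Q : List Vtx} {mu w mv : Vtx},
    P.head? = some mu → P.getLast? = some w → P.Chain' A →
    Q.head? = some w → Q.getLast? = some mv → Q.Chain' A →
    (P ++ Q.tail).head? = some mu ∧ (P ++ Q.tail).getLast? = some mv ∧
      (P ++ Q.tail).Chain' A ∧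
      wcost c (P ++ Q.tail) = wcost c P + wcost c Q ∧
      dirs (P ++ Q.tail) = dirs P ++ dirs Q := by
  intro P
  induction P with
  | nil => intro Q mu w mv h1 h2; simp at h1
  | cons a P' ih =>
    intro Q mu w mv h1 h2 h3 h4 h5 h6
    cases P' with
    | nil =>
      simp only [List.head?_cons, Option.some.injEq] at h1
      simp only [List.getLast?_singleton, Option.some.injEq] at h2
      cases Q with
      | nil => simp at h4
      | cons q t =>
        simp only [List.head?_cons, Option.some.injEq] at h4
        have haq : a = q := by rw [h2, ← h4]
        have hlist : (([a] : List Vtx) ++ t) = q :: t := by simp [haq]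
        refine ⟨by simp [h1], ?_, ?_, ?_, ?_⟩
        · simp only [List.tail_cons]; rw [hlist]; exact h5
        · simp only [List.tail_cons]; rw [hlist]; exact h6
        · simp only [List.tail_cons]; rw [hlist]
          show wcost c (q :: t) = 0 + wcost c (q :: t)
          ring
        · simp only [List.tail_cons]; rw [hlist]
          show dirs (q :: t) = dirs [a] ++ dirs (q :: t)
          simp [dirs]
    | cons b P'' =>
      simp only [List.head?_cons, Option.some.injEq] at h1
      subst h1
      rw [List.getLast?_cons_cons] at h2
      rw [List.Chain', List.isChain_cons_cons] at h3
      obtain ⟨hab, h3'⟩ := h3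
      obtain ⟨g1, g2, g3, g4, g5⟩ := ih (by rfl) h2 h3' h4 h5 h6
      have hX : ((b :: P'') ++ Q.tail).head? = some b := by simp
      refine ⟨by simp, ?_, ?_, ?_, ?_⟩
      · simpa only [List.cons_append, List.getLast?_cons_cons] using g2
      · rw [List.cons_append, List.Chain', List.isChain_cons]
        exact ⟨fun y hy => by rw [hX] at hy; simp at hy; subst hy; exact hab, g3⟩
      · rw [List.cons_append, wcost_cons c a hX, g4,
          wcost_cons c a (by rfl : (b :: P'').head? = some b)]
        ring
      · rw [List.cons_append, dirs_cons a hX, g5,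
          dirs_cons a (by rfl : (b :: P'').head? = some b)]
        rfl

end ListInfra

section Segments

variable {l : ℤ} {ch cv cvia : ℤ → ℝ}

lemma hor_seg (ch cv cvia : ℤ → ℝ) (y z a b : ℤ) (h1 : 1 ≤ z) (h2 : z ≤ l) :
    ∃ P : List Vtx, P.head? = some (a, y, z) ∧ P.getLast? = some (b, y, z) ∧
      P.Chain' (Adj l) ∧
      wcost (ecost ch cv cvia) P = ((|a - b| : ℤ) : ℝ) * nch l ch z ∧
      ∃ n, dirs P = List.replicate n Dir.hor := by
  rcases le_total a b with hab | hab
  · refine ⟨ray (fun i => (i, y, z)) a (b - a).toNat, ray_head? _ _ _, ?_, ?_, ?_, (b - a).toNat, ?_⟩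
    · rw [ray_getLast?]
      norm_num
      omega
    · refine ray_chain' _ _ _ (fun i _ => ?_)
      refine ⟨h1, h2, h1, h2, ?_⟩
      simp only [sub_self, abs_zero, add_zero]
      rw [show a + (i:ℤ) - (a + i + 1) = -1 by ring]
      norm_num
    · rw [ray_wcost]
      rw [Finset.sum_congr rfl (fun i _ => show ecost ch cv cvia _ _ = ch z by
        unfold ecost; rw [if_pos (by dsimp only; omega)])]
      rw [Finset.sum_const, Finset.card_range, nsmul_eq_mul, nch_eq ch h1 h2]
      congr 1
      have : ((b - a).toNat : ℤ) = |a - b| := by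
        rw [Int.abs_eq_natAbs]; omega
      exact_mod_cast this
    · refine ray_dirs _ _ _ (fun i _ => ?_)
      unfold dirOf
      rw [if_pos (by dsimp only; omega)]
  · refine ⟨ray (fun i => (-i, y, z)) (-a) (a - b).toNat, ?_, ?_, ?_, ?_, (a - b).toNat, ?_⟩
    · rw [ray_head?]; simp
    · rw [ray_getLast?]
      norm_num
      omega
    · refine ray_chain' _ _ _ (fun i _ => ?_)
      refine ⟨h1, h2, h1, h2, ?_⟩
      simp only [sub_self, abs_zero, add_zero]
      rw [show -(-a + (i:ℤ)) - -(-a + i + 1) = 1 by ring]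
      norm_num
    · rw [ray_wcost]
      rw [Finset.sum_congr rfl (fun i _ => show ecost ch cv cvia _ _ = ch z by
        unfold ecost; rw [if_pos (by dsimp only; omega)])]
      rw [Finset.sum_const, Finset.card_range, nsmul_eq_mul, nch_eq ch h1 h2]
      congr 1
      have : ((a - b).toNat : ℤ) = |a - b| := by
        rw [Int.abs_eq_natAbs]; omega
      exact_mod_cast this
    · refine ray_dirs _ _ _ (fun i _ => ?_)
      unfold dirOf
      rw [if_pos (by dsimp only; omega)]

lemma ver_seg (ch cv cvia : ℤ → ℝ) (x z a b : ℤ) (h1 : 1 ≤ z) (h2 : z ≤ l) :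
    ∃ P : List Vtx, P.head? = some (x, a, z) ∧ P.getLast? = some (x, b, z) ∧
      P.Chain' (Adj l) ∧
      wcost (ecost ch cv cvia) P = ((|a - b| : ℤ) : ℝ) * nch l cv z ∧
      ∃ n, dirs P = List.replicate n Dir.ver := by
  rcases le_total a b with hab | hab
  · refine ⟨ray (fun i => (x, i, z)) a (b - a).toNat, ray_head? _ _ _, ?_, ?_, ?_, (b - a).toNat, ?_⟩
    · rw [ray_getLast?]
      norm_num
      omega
    · refine ray_chain' _ _ _ (fun i _ => ?_)
      refine ⟨h1, h2, h1, h2, ?_⟩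
      simp only [sub_self, abs_zero, add_zero, zero_add]
      rw [show a + (i:ℤ) - (a + i + 1) = -1 by ring]
      norm_num
    · rw [ray_wcost]
      rw [Finset.sum_congr rfl (fun i _ => show ecost ch cv cvia _ _ = cv z by
        unfold ecost; rw [if_neg (by dsimp only; omega), if_pos (by dsimp only; omega)])]
      rw [Finset.sum_const, Finset.card_range, nsmul_eq_mul, nch_eq cv h1 h2]
      congr 1
      have : ((b - a).toNat : ℤ) = |a - b| := by
        rw [Int.abs_eq_natAbs]; omega
      exact_mod_cast this
    · refine ray_dirs _ _ _ (fun i _ => ?_)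
      unfold dirOf
      rw [if_neg (by dsimp only; omega), if_pos (by dsimp only; omega)]
  · refine ⟨ray (fun i => (x, -i, z)) (-a) (a - b).toNat, ?_, ?_, ?_, ?_, (a - b).toNat, ?_⟩
    · rw [ray_head?]; simp
    · rw [ray_getLast?]
      norm_num
      omega
    · refine ray_chain' _ _ _ (fun i _ => ?_)
      refine ⟨h1, h2, h1, h2, ?_⟩
      simp only [sub_self, abs_zero, add_zero, zero_add]
      rw [show -(-a + (i:ℤ)) - -(-a + i + 1) = 1 by ring]
      norm_num
    · rw [ray_wcost]
      rw [Finset.sum_congr rfl (fun i _ => show ecost ch cv cvia _ _ = cv z by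
        unfold ecost; rw [if_neg (by dsimp only; omega), if_pos (by dsimp only; omega)])]
      rw [Finset.sum_const, Finset.card_range, nsmul_eq_mul, nch_eq cv h1 h2]
      congr 1
      have : ((a - b).toNat : ℤ) = |a - b| := by
        rw [Int.abs_eq_natAbs]; omega
      exact_mod_cast this
    · refine ray_dirs _ _ _ (fun i _ => ?_)
      unfold dirOf
      rw [if_neg (by dsimp only; omega), if_pos (by dsimp only; omega)]

lemma via_seg (ch cv : ℤ → ℝ) {cvia : ℤ → ℝ} (hcvia : ∀ z, 1 ≤ z → z < l → 0 < cvia z)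
    (x y a b : ℤ) (ha1 : 1 ≤ a) (ha2 : a ≤ l) (hb1 : 1 ≤ b) (hb2 : b ≤ l) :
    ∃ P : List Vtx, P.head? = some (x, y, a) ∧ P.getLast? = some (x, y, b) ∧
      P.Chain' (Adj l) ∧
      wcost (ecost ch cv cvia) P = Wv l cvia a b ∧
      ∃ n, dirs P = List.replicate n Dir.via := by
  rcases le_total a b with hab | hab
  · refine ⟨ray (fun i => (x, y, i)) a (b - a).toNat, ray_head? _ _ _, ?_, ?_, ?_, (b - a).toNat, ?_⟩
    · rw [ray_getLast?]
      norm_num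
      omega
    · refine ray_chain' _ _ _ (fun i hi => ?_)
      refine ⟨by dsimp only; omega, by dsimp only; omega, by dsimp only; omega,
        by dsimp only; omega, ?_⟩
      simp only [sub_self, abs_zero, zero_add]
      rw [show a + (i:ℤ) - (a + i + 1) = -1 by ring]
      norm_num
    · rw [ray_wcost]
      calc ∑ i ∈ Finset.range (b - a).toNat,
            ecost ch cv cvia (x, y, a + (i:ℤ)) (x, y, a + (i:ℤ) + 1)
          = ∑ i ∈ Finset.range (b - a).toNat, nvia l cvia (a + (i:ℤ)) := by
            refine Finset.sum_congr rfl (fun i hi => ?_)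
            rw [Finset.mem_range] at hi
            unfold ecost
            rw [if_neg (by simp), if_neg (by simp)]
            show cvia (min (a + (i:ℤ)) (a + (i:ℤ) + 1)) = _
            rw [min_eq_left (by omega)]
            exact (nvia_eq cvia (by omega) (by omega)).symm
        _ = ∑ k ∈ Finset.Ico a (a + ((b - a).toNat : ℤ)), nvia l cvia k :=
            sum_Ico_ofRange _ _ _
        _ = Wv l cvia a b := by
            rw [show a + ((b - a).toNat : ℤ) = b by omega, Wv_eq_sum hcvia hab]
    · refine ray_dirs _ _ _ (fun i _ => ?_)
      unfold dirOf
      rw [if_neg (by simp), if_neg (by simp)]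
  · refine ⟨ray (fun i => (x, y, -i)) (-a) (a - b).toNat, ?_, ?_, ?_, ?_, (a - b).toNat, ?_⟩
    · rw [ray_head?]; simp
    · rw [ray_getLast?]
      norm_num
      omega
    · refine ray_chain' _ _ _ (fun i hi => ?_)
      refine ⟨by dsimp only; omega, by dsimp only; omega, by dsimp only; omega,
        by dsimp only; omega, ?_⟩
      simp only [sub_self, abs_zero, zero_add]
      rw [show -(-a + (i:ℤ)) - -(-a + (i:ℤ) + 1) = 1 by ring]
      norm_num
    · rw [ray_wcost]
      calc ∑ i ∈ Finset.range (a - b).toNat,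
            ecost ch cv cvia (x, y, -(-a + (i:ℤ))) (x, y, -(-a + (i:ℤ) + 1))
          = ∑ i ∈ Finset.range (a - b).toNat,
              nvia l cvia (b + (((a - b).toNat - 1 - i : ℕ) : ℤ)) := by
            refine Finset.sum_congr rfl (fun i hi => ?_)
            rw [Finset.mem_range] at hi
            unfold ecost
            rw [if_neg (by simp), if_neg (by simp)]
            show cvia (min (-(-a + (i:ℤ))) (-(-a + (i:ℤ) + 1))) = _
            rw [min_eq_right (by omega),
              show -(-a + (i:ℤ) + 1) = b + (((a - b).toNat - 1 - i : ℕ) : ℤ) by omega]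
            exact (nvia_eq cvia (by omega) (by omega)).symm
        _ = ∑ i ∈ Finset.range (a - b).toNat, nvia l cvia (b + (i:ℤ)) :=
            Finset.sum_range_reflect (fun j => nvia l cvia (b + (j:ℤ))) _
        _ = ∑ k ∈ Finset.Ico b (b + ((a - b).toNat : ℤ)), nvia l cvia k :=
            sum_Ico_ofRange _ _ _
        _ = Wv l cvia a b := by
            rw [show b + ((a - b).toNat : ℤ) = a by omega, Wv_symm, Wv_eq_sum hcvia hab]
    · refine ray_dirs _ _ _ (fun i _ => ?_)
      unfold dirOf
      rw [if_neg (by simp), if_neg (by simp)]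

end Segments

lemma count_pattern (d x1 x2 x3 x4 x5 : Dir) (a b c e f : ℕ) :
    ((List.replicate a x1 ++ (List.replicate b x2 ++ (List.replicate c x3 ++
      (List.replicate e x4 ++ List.replicate f x5)))).destutter (· ≠ ·)).count d ≤
    (if x1 = d then 1 else 0) + (if x2 = d then 1 else 0) + (if x3 = d then 1 else 0) +
      (if x4 = d then 1 else 0) + (if x5 = d then 1 else 0) := by
  have h5 : ((List.replicate f x5).destutter (· ≠ ·)).count d ≤ (if x5 = d then 1 else 0) := by
    have := count_destutter_replicate_append d x5 f []
    simpa using this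
  have h4 := count_destutter_replicate_append d x4 e (List.replicate f x5)
  have h3 := count_destutter_replicate_append d x3 c
    (List.replicate e x4 ++ List.replicate f x5)
  have h2 := count_destutter_replicate_append d x2 b
    (List.replicate c x3 ++ (List.replicate e x4 ++ List.replicate f x5))
  have h1 := count_destutter_replicate_append d x1 a
    (List.replicate b x2 ++ (List.replicate c x3 ++
      (List.replicate e x4 ++ List.replicate f x5)))
  split_ifs at * <;> omega

/-- In the simple cost model there is a minimum-cost path between `r` and `s`
containing at most one maximal sequence of consecutive horizontal edges and at most one
maximal sequence of consecutive vertical edges (and hence at most three maximal sequences of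
consecutive via edges).  The number of maximal runs of a direction is the number of
occurrences of that direction in the list of edge directions after collapsing adjacent
duplicates (`List.destutter (· ≠ ·)`). -/
theorem stmt0 (l : ℤ) (hl : 1 ≤ l) (ch cv cvia : ℤ → ℝ)
    (hch : ∀ z, 1 ≤ z → z ≤ l → 0 < ch z)
    (hcv : ∀ z, 1 ≤ z → z ≤ l → 0 < cv z)
    (hcvia : ∀ z, 1 ≤ z → z < l → 0 < cvia z)
    (r s : Vtx) (hr : 1 ≤ r.2.2 ∧ r.2.2 ≤ l) (hs : 1 ≤ s.2.2 ∧ s.2.2 ≤ l) :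
    ∃ P : List Vtx, IsWalkA (Adj l) P r s ∧
      (∀ Q : List Vtx, IsWalkA (Adj l) Q r s →
        wcost (ecost ch cv cvia) P ≤ wcost (ecost ch cv cvia) Q) ∧
      ((dirs P).destutter (· ≠ ·)).count Dir.hor ≤ 1 ∧
      ((dirs P).destutter (· ≠ ·)).count Dir.ver ≤ 1 ∧
      ((dirs P).destutter (· ≠ ·)).count Dir.via ≤ 3 := by
  obtain ⟨p, hpmem, hDr⟩ := Finset.exists_mem_eq_inf' (sqF_ne hl)
    (fun p => min (F1 l ch cv cvia s r p) (F2 l ch cv cvia s r p))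
  have hDr2 : DD l ch cv cvia s hl r =
      min (F1 l ch cv cvia s r p) (F2 l ch cv cvia s r p) := hDr
  have hp1 := (mem_sqF.mp hpmem).1
  have hp2 := (mem_sqF.mp hpmem).2
  rcases le_total (F1 l ch cv cvia s r p) (F2 l ch cv cvia s r p) with hF | hF
  · obtain ⟨P1, a1, a2, a3, a4, n1, a5⟩ :=
      via_seg (l := l) ch cv hcvia r.1 r.2.1 r.2.2 p.1 hr.1 hr.2 hp1.1 hp1.2
    obtain ⟨P2, b1, b2, b3, b4, n2, b5⟩ :=
      hor_seg (l := l) ch cv cvia r.2.1 p.1 r.1 s.1 hp1.1 hp1.2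
    obtain ⟨P3, c1, c2, c3, c4, n3, c5⟩ :=
      via_seg (l := l) ch cv hcvia s.1 r.2.1 p.1 p.2 hp1.1 hp1.2 hp2.1 hp2.2
    obtain ⟨P4, d1, d2, d3, d4, n4, d5⟩ :=
      ver_seg (l := l) ch cv cvia s.1 p.2 r.2.1 s.2.1 hp2.1 hp2.2
    obtain ⟨P5, e1, e2, e3, e4, n5, e5⟩ :=
      via_seg (l := l) ch cv hcvia s.1 s.2.1 p.2 s.2.2 hp2.1 hp2.2 hs.1 hs.2
    obtain ⟨g1, g2, g3, g4, g5⟩ := glue_spec (Adj l) (ecost ch cv cvia) P4 d1 d2 d3 e1 e2 e3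
    obtain ⟨f1, f2, f3, f4, f5⟩ := glue_spec (Adj l) (ecost ch cv cvia) P3 c1 c2 c3 g1 g2 g3
    obtain ⟨i1, i2, i3, i4, i5⟩ := glue_spec (Adj l) (ecost ch cv cvia) P2 b1 b2 b3 f1 f2 f3
    obtain ⟨j1, j2, j3, j4, j5⟩ := glue_spec (Adj l) (ecost ch cv cvia) P1 a1 a2 a3 i1 i2 i3
    have hwp : wcost (ecost ch cv cvia)
        (P1 ++ (P2 ++ (P3 ++ (P4 ++ P5.tail).tail).tail).tail) = F1 l ch cv cvia s r p := by
      rw [j4, i4, f4, g4, a4, b4, c4, d4, e4]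
      unfold F1
      ring
    have hdirs : dirs (P1 ++ (P2 ++ (P3 ++ (P4 ++ P5.tail).tail).tail).tail) =
        List.replicate n1 Dir.via ++ (List.replicate n2 Dir.hor ++ (List.replicate n3 Dir.via ++
          (List.replicate n4 Dir.ver ++ List.replicate n5 Dir.via))) := by
      rw [j5, i5, f5, g5, a5, b5, c5, d5, e5]
    refine ⟨P1 ++ (P2 ++ (P3 ++ (P4 ++ P5.tail).tail).tail).tail,
      ⟨by intro h; rw [h] at j1; simp at j1, j3, j1, j2⟩, ?_, ?_, ?_, ?_⟩
    · intro Q hQ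
      have hlb := walk_lb hl hch hcv hcvia hs Q r hQ.2.1 hQ.2.2.1 hQ.2.2.2
      calc wcost (ecost ch cv cvia) (P1 ++ (P2 ++ (P3 ++ (P4 ++ P5.tail).tail).tail).tail)
          = F1 l ch cv cvia s r p := hwp
        _ = DD l ch cv cvia s hl r := (hDr2.trans (min_eq_left hF)).symm
        _ ≤ wcost (ecost ch cv cvia) Q := hlb
    · rw [hdirs]
      exact (count_pattern Dir.hor _ _ _ _ _ _ _ _ _ _).trans (by decide)
    · rw [hdirs]
      exact (count_pattern Dir.ver _ _ _ _ _ _ _ _ _ _).trans (by decide)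
    · rw [hdirs]
      exact (count_pattern Dir.via _ _ _ _ _ _ _ _ _ _).trans (by decide)
  · obtain ⟨P1, a1, a2, a3, a4, n1, a5⟩ :=
      via_seg (l := l) ch cv hcvia r.1 r.2.1 r.2.2 p.2 hr.1 hr.2 hp2.1 hp2.2
    obtain ⟨P2, b1, b2, b3, b4, n2, b5⟩ :=
      ver_seg (l := l) ch cv cvia r.1 p.2 r.2.1 s.2.1 hp2.1 hp2.2
    obtain ⟨P3, c1, c2, c3, c4, n3, c5⟩ :=
      via_seg (l := l) ch cv hcvia r.1 s.2.1 p.2 p.1 hp2.1 hp2.2 hp1.1 hp1.2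
    obtain ⟨P4, d1, d2, d3, d4, n4, d5⟩ :=
      hor_seg (l := l) ch cv cvia s.2.1 p.1 r.1 s.1 hp1.1 hp1.2
    obtain ⟨P5, e1, e2, e3, e4, n5, e5⟩ :=
      via_seg (l := l) ch cv hcvia s.1 s.2.1 p.1 s.2.2 hp1.1 hp1.2 hs.1 hs.2
    obtain ⟨g1, g2, g3, g4, g5⟩ := glue_spec (Adj l) (ecost ch cv cvia) P4 d1 d2 d3 e1 e2 e3
    obtain ⟨f1, f2, f3, f4, f5⟩ := glue_spec (Adj l) (ecost ch cv cvia) P3 c1 c2 c3 g1 g2 g3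
    obtain ⟨i1, i2, i3, i4, i5⟩ := glue_spec (Adj l) (ecost ch cv cvia) P2 b1 b2 b3 f1 f2 f3
    obtain ⟨j1, j2, j3, j4, j5⟩ := glue_spec (Adj l) (ecost ch cv cvia) P1 a1 a2 a3 i1 i2 i3
    have hwp : wcost (ecost ch cv cvia)
        (P1 ++ (P2 ++ (P3 ++ (P4 ++ P5.tail).tail).tail).tail) = F2 l ch cv cvia s r p := by
      rw [j4, i4, f4, g4, a4, b4, c4, d4, e4]
      unfold F2
      ring
    have hdirs : dirs (P1 ++ (P2 ++ (P3 ++ (P4 ++ P5.tail).tail).tail).tail) =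
        List.replicate n1 Dir.via ++ (List.replicate n2 Dir.ver ++ (List.replicate n3 Dir.via ++
          (List.replicate n4 Dir.hor ++ List.replicate n5 Dir.via))) := by
      rw [j5, i5, f5, g5, a5, b5, c5, d5, e5]
    refine ⟨P1 ++ (P2 ++ (P3 ++ (P4 ++ P5.tail).tail).tail).tail,
      ⟨by intro h; rw [h] at j1; simp at j1, j3, j1, j2⟩, ?_, ?_, ?_, ?_⟩
    · intro Q hQ
      have hlb := walk_lb hl hch hcv hcvia hs Q r hQ.2.1 hQ.2.2.1 hQ.2.2.2
      calc wcost (ecost ch cv cvia) (P1 ++ (P2 ++ (P3 ++ (P4 ++ P5.tail).tail).tail).tail)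
          = F2 l ch cv cvia s r p := hwp
        _ = DD l ch cv cvia s hl r := (hDr2.trans (min_eq_right hF)).symm
        _ ≤ wcost (ecost ch cv cvia) Q := hlb
    · rw [hdirs]
      exact (count_pattern Dir.hor _ _ _ _ _ _ _ _ _ _).trans (by decide)
    · rw [hdirs]
      exact (count_pattern Dir.ver _ _ _ _ _ _ _ _ _ _).trans (by decide)
    · rw [hdirs]
      exact (count_pattern Dir.via _ _ _ _ _ _ _ _ _ _).trans (by decide)
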